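/- If a convex-polyhedral constraint C on ℤ², given as a finite conjunction of linear inequalities, contains the point (n, fib(n)) for every n ∈ ℕ, then C cannot certify the Fibonacci recurrence inequality: there exist integers n1, f1, f2, f3 with n1 ≥ 0, f3 > f1 + f2, C(n1, f1), C(n1+1, f2), and C(n1+2, f3). -/

import Mathlib

def fib : ℕ → ℕ
  | 0 => 1
  | 1 => 1
  | n+2 => fib n + fib (n+1)

lemma fib_pos : ∀ n, 0 < fib n
  | 0 => by simp [fib]
  | 1 => by simp [fib]
  | n+2 => by
      have := fib_pos n
      simp [fib]; omega

lemma fib_le_succ : ∀ n, fib n ≤ fib (n+1)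
  | 0 => by simp [fib]
  | n+1 => by
      have := fib_pos (n+1)
      show fib (n+1) ≤ fib n + fib (n+1)
      have := fib_pos n
      omega

lemma pow_le_fib : ∀ m, 2^m ≤ fib (2*m)
  | 0 => by simp [fib]
  | m+1 => by
      have ih := pow_le_fib m
      have h1 : fib (2*m) ≤ fib (2*m+1) := fib_le_succ _
      have h2 : fib (2*(m+1)) = fib (2*m) + fib (2*m+1) := by
        have : 2*(m+1) = (2*m)+2 := by ring
        rw [this]; rfl
      have : 2^(m+1) = 2^m + 2^m := by ring
      omega

theorem polyhedral_cannot_certify_fib (k : ℕ) (p q r : Fin k → ℤ)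
    (h : ∀ n : ℕ, ∀ i : Fin k, p i * (n : ℤ) + q i * (fib n : ℤ) ≥ r i) :
    ∃ n1 f1 f2 f3 : ℤ, n1 ≥ 0 ∧ f3 > f1 + f2 ∧
      (∀ i : Fin k, p i * n1 + q i * f1 ≥ r i) ∧
      (∀ i : Fin k, p i * (n1 + 1) + q i * f2 ≥ r i) ∧
      (∀ i : Fin k, p i * (n1 + 2) + q i * f3 ≥ r i) := by
  have hq : ∀ i : Fin k, 0 ≤ q i := by
    intro i
    by_contra hq
    push_neg at hq
    have hq' : q i ≤ -1 := by omega
    set K : ℕ := (p i).natAbs + (r i).natAbs + 1 with hK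
    have hp : p i ≤ (K : ℤ) := by
      have h1 : (p i).natAbs ≤ K := by omega
      calc p i ≤ ((p i).natAbs : ℤ) := Int.le_natAbs
        _ ≤ (K : ℤ) := by exact_mod_cast h1
    have hr : -(K : ℤ) ≤ r i := by
      have h1 : (r i).natAbs ≤ K := by omega
      have h2 : -((r i).natAbs : ℤ) ≤ r i := by
        rcases Int.natAbs_eq (r i) with h | h <;> omega
      calc -(K:ℤ) ≤ -((r i).natAbs : ℤ) := by
            simp only [neg_le_neg_iff]; exact_mod_cast h1
        _ ≤ r i := h2
    have hfib : ((2:ℕ)^(4*K) : ℤ) ≤ (fib (8*K) : ℤ) := by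
      have := pow_le_fib (4*K)
      have h8 : 2*(4*K) = 8*K := by ring
      rw [h8] at this
      exact_mod_cast this
    have hKpow : (K : ℤ) + 1 ≤ 2^K := by
      have := Nat.lt_two_pow_self (n := K)
      exact_mod_cast this
    have h1 := h (8*K) i
    have hfn : (0:ℤ) < (fib (8*K) : ℤ) := by exact_mod_cast fib_pos (8*K)
    -- q i * fib ≤ - fib
    have hq2 : q i * (fib (8*K) : ℤ) ≤ -(fib (8*K) : ℤ) := by nlinarith
    have hn : ((8*K : ℕ) : ℤ) = 8*(K:ℤ) := by push_cast; ring
    rw [hn] at h1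
    have hK1 : (1:ℤ) ≤ (K:ℤ) := by exact_mod_cast Nat.one_le_iff_ne_zero.mpr (by omega)
    have hpow : ((K:ℤ)+1)^4 ≤ ((2:ℕ)^(4*K) : ℤ) := by
      have : ((2:ℕ)^(4*K) : ℤ) = ((2:ℤ)^K)^4 := by push_cast; ring
      rw [this]
      exact pow_le_pow_left₀ (by positivity) hKpow 4
    have hp8 : p i * (8*(K:ℤ)) ≤ (K:ℤ)*(8*(K:ℤ)) := by nlinarith
    have hbig : ((K:ℤ)+1)^4 ≤ (fib (8*K) : ℤ) := le_trans hpow hfib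
    nlinarith [hbig, h1, hq2, hp8, hr, hK1, sq_nonneg ((K:ℤ)-1), sq_nonneg ((K:ℤ)+1)]
  refine ⟨0, 1, 1, 3, le_refl 0, by norm_num, ?_, ?_, ?_⟩
  · intro i
    have := h 0 i
    simpa [fib] using this
  · intro i
    have := h 1 i
    simpa [fib] using this
  · intro i
    have := h 2 i
    have hf2 : (fib 2 : ℤ) = 2 := by norm_num [fib]
    have hqi := hq i
    push_cast [hf2] at this
    nlinarith
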